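/- The group G = ⟨a, b, t | t⁻¹at = b, t⁻¹bt = aba⁻¹⟩ is not subgroup separable: the subgroup L₁ = ⟨a, b⟩ is properly contained in its conjugate L₂ = tL₁t⁻¹, hence L₁ is not separable in G. -/

import Mathlib

/-- Generators: `0 = a`, `1 = b`, `2 = t`.  Relations of
`⟨a, b, t | t⁻¹at = b, t⁻¹bt = aba⁻¹⟩`. -/
def grels : Set (FreeGroup (Fin 3)) :=
  {(FreeGroup.of 2)⁻¹ * FreeGroup.of 0 * FreeGroup.of 2 * (FreeGroup.of 1)⁻¹,
   (FreeGroup.of 2)⁻¹ * FreeGroup.of 1 * FreeGroup.of 2 *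
     (FreeGroup.of 0 * FreeGroup.of 1 * (FreeGroup.of 0)⁻¹)⁻¹}

namespace Stmt13Aux
open Matrix

abbrev Mat := Matrix.SpecialLinearGroup (Fin 2) ℚ
abbrev Fq := FreeGroup (Fin 2)

def Amat : Mat := ⟨!![1,2;0,1], by norm_num [Matrix.det_fin_two_of]⟩
def Bmat : Mat := ⟨!![1,0;2,1], by norm_num [Matrix.det_fin_two_of]⟩
def Cmat : Mat := ⟨!![5,-8;2,-3], by norm_num [Matrix.det_fin_two_of]⟩

def V := {v : Fin 2 → ℚ // v ≠ 0}

instance : MulAction Mat V where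
  smul g v := ⟨(g : Matrix (Fin 2) (Fin 2) ℚ).mulVec v.1, by
    intro h
    apply v.2
    have h2 : ((g⁻¹ : Mat) : Matrix (Fin 2) (Fin 2) ℚ).mulVec
        ((g : Matrix (Fin 2) (Fin 2) ℚ).mulVec v.1) = 0 := by
      rw [h, Matrix.mulVec_zero]
    rwa [Matrix.mulVec_mulVec, ← Matrix.SpecialLinearGroup.coe_mul, inv_mul_cancel,
      Matrix.SpecialLinearGroup.coe_one, Matrix.one_mulVec] at h2⟩
  one_smul v := Subtype.ext (by
    show ((1 : Mat) : Matrix (Fin 2) (Fin 2) ℚ).mulVec v.1 = v.1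
    rw [Matrix.SpecialLinearGroup.coe_one, Matrix.one_mulVec])
  mul_smul g h v := Subtype.ext (by
    show ((g * h : Mat) : Matrix (Fin 2) (Fin 2) ℚ).mulVec v.1 = _
    rw [Matrix.SpecialLinearGroup.coe_mul, ← Matrix.mulVec_mulVec]
    rfl)

lemma smul_coe (g : Mat) (v : V) :
    (g • v).1 = (g : Matrix (Fin 2) (Fin 2) ℚ).mulVec v.1 := rfl

def X0 : Set V := {v | v.1 0 * (4 * v.1 1 - 3 * v.1 0) > 0 ∨ v.1 0 = 0}
def X1 : Set V := {v | v.1 0 * v.1 1 > 0 ∧ v.1 0 * (2 * v.1 1 - v.1 0) ≤ 0}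
def Y0 : Set V := {v | v.1 0 * (4 * v.1 1 + 3 * v.1 0) < 0}
def Y1 : Set V := {v | v.1 0 * (2 * v.1 1 - v.1 0) > 0 ∧ v.1 0 * (4 * v.1 1 - 3 * v.1 0) < 0}

def Xpp : Fin 2 → Set V := ![X0, X1]
def Ypp : Fin 2 → Set V := ![Y0, Y1]

lemma B_smul (v : V) : (Bmat • v).1 = ![v.1 0, 2 * v.1 0 + v.1 1] := by
  funext i
  rw [smul_coe]
  fin_cases i <;>
    simp [Bmat, Matrix.mulVec, dotProduct, Fin.sum_univ_two] <;>
    ring_nf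

lemma Binv_smul (v : V) : (Bmat⁻¹ • v).1 = ![v.1 0, -2 * v.1 0 + v.1 1] := by
  funext i
  rw [smul_coe]
  have h : ((Bmat⁻¹ : Mat) : Matrix (Fin 2) (Fin 2) ℚ) = !![1,0;-2,1] := by
    rw [Matrix.SpecialLinearGroup.coe_inv]
    simp [Bmat, Matrix.adjugate_fin_two]
  rw [h]
  fin_cases i <;>
    simp [Matrix.mulVec, dotProduct, Fin.sum_univ_two] <;>
    ring_nf

lemma C_smul (v : V) : (Cmat • v).1 = ![5 * v.1 0 - 8 * v.1 1, 2 * v.1 0 - 3 * v.1 1] := by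
  funext i
  rw [smul_coe]
  fin_cases i <;>
    simp [Cmat, Matrix.mulVec, dotProduct, Fin.sum_univ_two] <;>
    ring_nf

lemma Cinv_smul (v : V) :
    (Cmat⁻¹ • v).1 = ![-3 * v.1 0 + 8 * v.1 1, -2 * v.1 0 + 5 * v.1 1] := by
  funext i
  rw [smul_coe]
  have h : ((Cmat⁻¹ : Mat) : Matrix (Fin 2) (Fin 2) ℚ) = !![-3,8;-2,5] := by
    rw [Matrix.SpecialLinearGroup.coe_inv]
    simp [Cmat, Matrix.adjugate_fin_two]
  rw [h]
  fin_cases i <;>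
    simp [Matrix.mulVec, dotProduct, Fin.sum_univ_two] <;>
    ring_nf

lemma vec_nonzero (v : V) : v.1 0 ≠ 0 ∨ v.1 1 ≠ 0 := by
  by_contra h
  push_neg at h
  apply v.2
  funext i
  fin_cases i
  · exact h.1
  · exact h.2

lemma disj_X0_X1 : Disjoint X0 X1 := by
  rw [Set.disjoint_left]
  intro v h1 h2
  have h1' : v.1 0 * (4 * v.1 1 - 3 * v.1 0) > 0 ∨ v.1 0 = 0 := h1
  have h2' : v.1 0 * v.1 1 > 0 ∧ v.1 0 * (2 * v.1 1 - v.1 0) ≤ 0 := h2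
  obtain ⟨h2a, h2b⟩ := h2'
  rcases h1' with h1' | h1'
  · nlinarith [sq_nonneg (v.1 0)]
  · rw [h1'] at h2a; simp at h2a

lemma disj_Y0_Y1 : Disjoint Y0 Y1 := by
  rw [Set.disjoint_left]
  intro v h1 h2
  have h1' : v.1 0 * (4 * v.1 1 + 3 * v.1 0) < 0 := h1
  have h2' : v.1 0 * (2 * v.1 1 - v.1 0) > 0 ∧ v.1 0 * (4 * v.1 1 - 3 * v.1 0) < 0 := h2
  nlinarith [sq_nonneg (v.1 0), h2'.1, h2'.2]

lemma disj_X0_Y0 : Disjoint X0 Y0 := by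
  rw [Set.disjoint_left]
  intro v h1 h2
  have h1' : v.1 0 * (4 * v.1 1 - 3 * v.1 0) > 0 ∨ v.1 0 = 0 := h1
  have h2' : v.1 0 * (4 * v.1 1 + 3 * v.1 0) < 0 := h2
  rcases h1' with h1' | h1'
  · nlinarith [sq_nonneg (v.1 0)]
  · rw [h1'] at h2'; simp at h2'

lemma disj_X0_Y1 : Disjoint X0 Y1 := by
  rw [Set.disjoint_left]
  intro v h1 h2
  have h1' : v.1 0 * (4 * v.1 1 - 3 * v.1 0) > 0 ∨ v.1 0 = 0 := h1
  have h2' : v.1 0 * (2 * v.1 1 - v.1 0) > 0 ∧ v.1 0 * (4 * v.1 1 - 3 * v.1 0) < 0 := h2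
  rcases h1' with h1' | h1'
  · linarith [h2'.2]
  · rw [h1'] at h2'
    simp only [zero_mul] at h2'
    exact absurd h2'.1 (by norm_num)

lemma disj_X1_Y0 : Disjoint X1 Y0 := by
  rw [Set.disjoint_left]
  intro v h1 h2
  have h1' : v.1 0 * v.1 1 > 0 ∧ v.1 0 * (2 * v.1 1 - v.1 0) ≤ 0 := h1
  have h2' : v.1 0 * (4 * v.1 1 + 3 * v.1 0) < 0 := h2
  nlinarith [sq_nonneg (v.1 0), h1'.1, h1'.2]

lemma disj_X1_Y1 : Disjoint X1 Y1 := by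
  rw [Set.disjoint_left]
  intro v h1 h2
  have h1' : v.1 0 * v.1 1 > 0 ∧ v.1 0 * (2 * v.1 1 - v.1 0) ≤ 0 := h1
  have h2' : v.1 0 * (2 * v.1 1 - v.1 0) > 0 ∧ v.1 0 * (4 * v.1 1 - 3 * v.1 0) < 0 := h2
  linarith [h1'.2, h2'.1]

section
variable (x y : ℚ)
lemma arith1 (h : x ≠ 0) (h2 : 0 ≤ x*(4*y+3*x)) : x*(4*(2*x+y)-3*x) > 0 := by
  nlinarith [mul_self_pos.mpr h]
lemma arith2 (h : x ≠ 0) (h2 : x*(4*y-3*x) ≤ 0) : x*(4*(-2*x+y)+3*x) < 0 := by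
  nlinarith [mul_self_pos.mpr h]
lemma arC1A (h : x ≠ 0) (h2 : x*(2*y-x) ≤ 0) : (5*x-8*y)*(2*x-3*y) > 0 := by
  nlinarith [mul_self_pos.mpr h, sq_nonneg (x-2*y), sq_nonneg (x-4*y), sq_nonneg y]
lemma arC2A (h2 : x*(2*y-x) ≤ 0) : (5*x-8*y)*(2*(2*x-3*y)-(5*x-8*y)) ≤ 0 := by
  nlinarith [sq_nonneg (x-2*y)]
lemma arC1B (h : x ≠ 0) (h2 : 0 ≤ x*(4*y-3*x)) : (5*x-8*y)*(2*x-3*y) > 0 := by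
  nlinarith [mul_self_pos.mpr h, sq_nonneg (2*x-3*y), sq_nonneg y, sq_nonneg (x-3*y)]
lemma arC2B (h2 : 0 ≤ x*(4*y-3*x)) : (5*x-8*y)*(2*(2*x-3*y)-(5*x-8*y)) ≤ 0 := by
  nlinarith [sq_nonneg (2*x-3*y), sq_nonneg y]
lemma arC10 (h : y ≠ 0) : (5*0-8*y)*(2*0-3*y) > 0 := by nlinarith [mul_self_pos.mpr h]
lemma arC20 : (5*0-8*y)*(2*(2*0-3*y)-(5*0-8*y)) ≤ 0 := by nlinarith [sq_nonneg y]
lemma arD1A (hnz : x ≠ 0 ∨ y ≠ 0) (h2 : x*y ≤ 0) :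
    (-3*x+8*y)*(2*(-2*x+5*y)-(-3*x+8*y)) > 0 := by
  rcases hnz with h | h <;>
  nlinarith [mul_self_pos.mpr h, sq_nonneg x, sq_nonneg y, sq_nonneg (x-2*y)]
lemma arD1B (h2 : x*(2*y-x) > 0) :
    (-3*x+8*y)*(2*(-2*x+5*y)-(-3*x+8*y)) > 0 := by
  nlinarith [sq_nonneg (x-2*y)]
lemma arD2A (hnz : x ≠ 0 ∨ y ≠ 0) (h2 : x*y ≤ 0) :
    (-3*x+8*y)*(4*(-2*x+5*y)-3*(-3*x+8*y)) < 0 := by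
  rcases hnz with h | h <;>
  nlinarith [mul_self_pos.mpr h, sq_nonneg x, sq_nonneg y, sq_nonneg (x-2*y)]
lemma arD2B (h2 : x*(2*y-x) > 0) :
    (-3*x+8*y)*(4*(-2*x+5*y)-3*(-3*x+8*y)) < 0 := by
  nlinarith [sq_nonneg (x-2*y), sq_nonneg y]
end

lemma jMat_inj : Function.Injective (FreeGroup.lift ![Bmat, Cmat] : Fq →* Mat) := by
  apply FreeGroup.injective_lift_of_ping_pong ![Bmat, Cmat] Xpp Ypp
  · -- nonempty
    intro i
    fin_cases i
    · refine ⟨⟨![1, 1], fun h => by simpa using congrFun h 0⟩, ?_⟩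
      show _ ∈ X0
      left; norm_num
    · refine ⟨⟨![4, 1], fun h => by simpa using congrFun h 1⟩, ?_⟩
      show _ ∈ X1
      constructor <;> norm_num
  · intro i j hij
    fin_cases i <;> fin_cases j
    · simp at hij
    · exact disj_X0_X1
    · exact disj_X0_X1.symm
    · simp at hij
  · intro i j hij
    fin_cases i <;> fin_cases j
    · simp at hij
    · exact disj_Y0_Y1
    · exact disj_Y0_Y1.symm
    · simp at hij
  · intro i j
    fin_cases i <;> fin_cases j
    · exact disj_X0_Y0
    · exact disj_X0_Y1
    · exact disj_X1_Y0
    · exact disj_X1_Y1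
  · -- hX
    intro i
    fin_cases i
    · rintro w ⟨v, hv, rfl⟩
      have hv' : ¬ (v.1 0 * (4 * v.1 1 + 3 * v.1 0) < 0) := hv
      push_neg at hv'
      show Bmat • v ∈ X0
      have e0 : (Bmat • v).1 0 = v.1 0 := by rw [B_smul]; rfl
      have e1 : (Bmat • v).1 1 = 2 * v.1 0 + v.1 1 := by rw [B_smul]; rfl
      show (Bmat • v).1 0 * (4 * (Bmat • v).1 1 - 3 * (Bmat • v).1 0) > 0 ∨ (Bmat • v).1 0 = 0
      rw [e0, e1]
      rcases eq_or_ne (v.1 0) 0 with h | h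
      · right; exact h
      · left; exact arith1 _ _ h hv'
    · rintro w ⟨v, hv, rfl⟩
      have hv' : ¬ (v.1 0 * (2 * v.1 1 - v.1 0) > 0 ∧ v.1 0 * (4 * v.1 1 - 3 * v.1 0) < 0) := hv
      show Cmat • v ∈ X1
      have e0 : (Cmat • v).1 0 = 5 * v.1 0 - 8 * v.1 1 := by rw [C_smul]; rfl
      have e1 : (Cmat • v).1 1 = 2 * v.1 0 - 3 * v.1 1 := by rw [C_smul]; rfl
      show (Cmat • v).1 0 * (Cmat • v).1 1 > 0 ∧
        (Cmat • v).1 0 * (2 * (Cmat • v).1 1 - (Cmat • v).1 0) ≤ 0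
      rw [e0, e1]
      rcases eq_or_ne (v.1 0) 0 with hx | hx
      · have hy : v.1 1 ≠ 0 := by
          rcases vec_nonzero v with h' | h'
          · exact absurd hx h'
          · exact h'
        rw [hx]
        exact ⟨arC10 _ hy, arC20 _⟩
      · rcases not_and_or.mp hv' with h | h
        · push_neg at h
          exact ⟨arC1A _ _ hx h, arC2A _ _ h⟩
        · push_neg at h
          exact ⟨arC1B _ _ hx h, arC2B _ _ h⟩
  · -- hY
    intro i
    fin_cases i
    · rintro w ⟨v, hv, rfl⟩
      have hv' : ¬ (v.1 0 * (4 * v.1 1 - 3 * v.1 0) > 0 ∨ v.1 0 = 0) := hv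
      push_neg at hv'
      obtain ⟨h1, h2⟩ := hv'
      show (![Bmat, Cmat])⁻¹ 0 • v ∈ Y0
      have hB : (![Bmat, Cmat])⁻¹ 0 = Bmat⁻¹ := by simp
      rw [hB]
      have e0 : (Bmat⁻¹ • v).1 0 = v.1 0 := by rw [Binv_smul]; rfl
      have e1 : (Bmat⁻¹ • v).1 1 = -2 * v.1 0 + v.1 1 := by rw [Binv_smul]; rfl
      show (Bmat⁻¹ • v).1 0 * (4 * (Bmat⁻¹ • v).1 1 + 3 * (Bmat⁻¹ • v).1 0) < 0
      rw [e0, e1]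
      exact arith2 _ _ h2 h1
    · rintro w ⟨v, hv, rfl⟩
      have hv' : ¬ (v.1 0 * v.1 1 > 0 ∧ v.1 0 * (2 * v.1 1 - v.1 0) ≤ 0) := hv
      show (![Bmat, Cmat])⁻¹ 1 • v ∈ Y1
      have hC : (![Bmat, Cmat])⁻¹ 1 = Cmat⁻¹ := by simp
      rw [hC]
      have e0 : (Cmat⁻¹ • v).1 0 = -3 * v.1 0 + 8 * v.1 1 := by rw [Cinv_smul]; rfl
      have e1 : (Cmat⁻¹ • v).1 1 = -2 * v.1 0 + 5 * v.1 1 := by rw [Cinv_smul]; rfl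
      show (Cmat⁻¹ • v).1 0 * (2 * (Cmat⁻¹ • v).1 1 - (Cmat⁻¹ • v).1 0) > 0 ∧
        (Cmat⁻¹ • v).1 0 * (4 * (Cmat⁻¹ • v).1 1 - 3 * (Cmat⁻¹ • v).1 0) < 0
      rw [e0, e1]
      rcases not_and_or.mp hv' with h | h
      · push_neg at h
        exact ⟨arD1A _ _ (vec_nonzero v) h, arD2A _ _ (vec_nonzero v) h⟩
      · push_neg at h
        exact ⟨arD1B _ _ h, arD2B _ _ h⟩


lemma Cmat_eq : Cmat = Amat * Bmat * Amat⁻¹ := by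
  rw [eq_mul_inv_iff_mul_eq]
  ext i j
  simp only [Matrix.SpecialLinearGroup.coe_mul]
  fin_cases i <;> fin_cases j <;>
    · simp [Amat, Bmat, Cmat, Matrix.mul_apply, Fin.sum_univ_two]
      try norm_num

def jF : Fq →* Fq :=
  FreeGroup.lift ![FreeGroup.of 1, FreeGroup.of 0 * FreeGroup.of 1 * (FreeGroup.of 0)⁻¹]

abbrev M := Mat × Fq

def i1 : Fq →* M := (FreeGroup.lift ![Amat, Bmat]).prod (MonoidHom.id Fq)
def i2 : Fq →* M := (FreeGroup.lift ![Bmat, Cmat]).prod jF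

lemma i1_inj : Function.Injective i1 := fun g h hgh => congrArg Prod.snd hgh
lemma i2_inj : Function.Injective i2 := fun g h hgh => jMat_inj (congrArg Prod.fst hgh)

def αel : M := (Amat, FreeGroup.of 0)
def βel : M := (Bmat, FreeGroup.of 1)

lemma i1_of0 : i1 (FreeGroup.of 0) = αel := by
  simp [i1, αel]
lemma i1_of1 : i1 (FreeGroup.of 1) = βel := by
  simp [i1, βel]
lemma i2_of0 : i2 (FreeGroup.of 0) = βel := by
  simp [i2, jF, βel]
lemma i2_of1 : i2 (FreeGroup.of 1) = αel * βel * αel⁻¹ := by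
  apply Prod.ext
  · show (FreeGroup.lift ![Bmat, Cmat]) (FreeGroup.of 1) = Amat * Bmat * Amat⁻¹
    rw [← Cmat_eq]
    simp
  · show jF (FreeGroup.of 1) = FreeGroup.of 0 * FreeGroup.of 1 * (FreeGroup.of 0)⁻¹
    simp [jF]

noncomputable def φiso : (i2.range : Subgroup M) ≃* (i1.range : Subgroup M) :=
  (MonoidHom.ofInjective i2_inj).symm.trans (MonoidHom.ofInjective i1_inj)

abbrev HN := HNNExtension M i2.range i1.range φiso

lemma αel_mem_B : αel ∈ i1.range := ⟨FreeGroup.of 0, i1_of0⟩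
lemma βel_mem_B : βel ∈ i1.range := ⟨FreeGroup.of 1, i1_of1⟩

lemma φiso_symm_α : ((φiso.symm ⟨αel, αel_mem_B⟩ : i2.range) : M) = βel := by
  have h1 : (MonoidHom.ofInjective i1_inj).symm ⟨αel, αel_mem_B⟩ = FreeGroup.of 0 := by
    rw [MulEquiv.symm_apply_eq]
    exact Subtype.ext i1_of0.symm
  show ((MonoidHom.ofInjective i2_inj) ((MonoidHom.ofInjective i1_inj).symm ⟨αel, αel_mem_B⟩) : M) = βel
  rw [h1]
  rw [MonoidHom.ofInjective_apply]
  exact i2_of0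

lemma φiso_symm_β : ((φiso.symm ⟨βel, βel_mem_B⟩ : i2.range) : M) = αel * βel * αel⁻¹ := by
  have h1 : (MonoidHom.ofInjective i1_inj).symm ⟨βel, βel_mem_B⟩ = FreeGroup.of 1 := by
    rw [MulEquiv.symm_apply_eq]
    exact Subtype.ext i1_of1.symm
  show ((MonoidHom.ofInjective i2_inj) ((MonoidHom.ofInjective i1_inj).symm ⟨βel, βel_mem_B⟩) : M) = _
  rw [h1, MonoidHom.ofInjective_apply]
  exact i2_of1

lemma rel_a : (HNNExtension.t)⁻¹ * HNNExtension.of αel * HNNExtension.t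
    = (HNNExtension.of βel : HN) := by
  have := HNNExtension.inv_t_mul_of (φ := φiso) ⟨αel, αel_mem_B⟩
  rw [this, φiso_symm_α, mul_assoc, inv_mul_cancel, mul_one]

lemma rel_b : (HNNExtension.t)⁻¹ * HNNExtension.of βel * HNNExtension.t
    = (HNNExtension.of (αel * βel * αel⁻¹) : HN) := by
  have := HNNExtension.inv_t_mul_of (φ := φiso) ⟨βel, βel_mem_B⟩
  rw [this, φiso_symm_β, mul_assoc, inv_mul_cancel, mul_one]

lemma αel_notin_A : αel ∉ (i2.range : Subgroup M) := by
  rintro ⟨g, hg⟩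
  have h2 : jF g = FreeGroup.of 0 := congrArg Prod.snd hg
  set e0 : Fq →* Multiplicative ℤ := FreeGroup.lift ![Multiplicative.ofAdd 1, 1] with he0
  have hcomp : e0.comp jF = 1 := by
    apply FreeGroup.ext_hom
    intro i
    fin_cases i <;> simp [he0, jF]
  have h3 : e0 (jF g) = e0 (FreeGroup.of 0) := congrArg e0 h2
  rw [← MonoidHom.comp_apply, hcomp] at h3
  have h4 : e0 (FreeGroup.of 0) = Multiplicative.ofAdd 1 := by simp [he0]
  rw [h4] at h3
  have h5 : (1 : Multiplicative ℤ) = Multiplicative.ofAdd 1 := by simpa using h3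
  exact absurd h5 (by decide)



abbrev G := PresentedGroup grels

end Stmt13Aux

namespace Stmt13Aux

noncomputable def f3 : Fin 3 → HN := ![HNNExtension.of αel, HNNExtension.of βel, HNNExtension.t]

lemma hrels : ∀ r ∈ grels, FreeGroup.lift f3 r = 1 := by
  intro r hr
  rcases hr with h | h
  · subst h
    simp only [map_mul, map_inv, FreeGroup.lift_apply_of, f3]
    rw [show (![HNNExtension.of αel, HNNExtension.of βel, HNNExtension.t] : Fin 3 → HN) 2
        = HNNExtension.t from rfl]
    rw [show (![HNNExtension.of αel, HNNExtension.of βel, HNNExtension.t] : Fin 3 → HN) 0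
        = HNNExtension.of αel from rfl]
    rw [show (![HNNExtension.of αel, HNNExtension.of βel, HNNExtension.t] : Fin 3 → HN) 1
        = HNNExtension.of βel from rfl]
    rw [rel_a]
    simp
  · rw [Set.mem_singleton_iff] at h
    subst h
    simp only [map_mul, map_inv, FreeGroup.lift_apply_of, f3]
    rw [show (![HNNExtension.of αel, HNNExtension.of βel, HNNExtension.t] : Fin 3 → HN) 2
        = HNNExtension.t from rfl]
    rw [show (![HNNExtension.of αel, HNNExtension.of βel, HNNExtension.t] : Fin 3 → HN) 0
        = HNNExtension.of αel from rfl]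
    rw [show (![HNNExtension.of αel, HNNExtension.of βel, HNNExtension.t] : Fin 3 → HN) 1
        = HNNExtension.of βel from rfl]
    rw [rel_b]
    simp only [← map_mul, ← map_inv]
    rw [mul_inv_cancel]
    exact map_one _

noncomputable def χ : G →* HN := PresentedGroup.toGroup hrels

lemma χ_of0 : χ (PresentedGroup.of 0) = HNNExtension.of αel := PresentedGroup.toGroup.of hrels
lemma χ_of1 : χ (PresentedGroup.of 1) = HNNExtension.of βel := PresentedGroup.toGroup.of hrels
lemma χ_of2 : χ (PresentedGroup.of 2) = HNNExtension.t := PresentedGroup.toGroup.of hrels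

/-- Britton's lemma applied to our witness. -/
lemma witness_not_in_of_range :
    (HNNExtension.t * HNNExtension.of αel * HNNExtension.t⁻¹ : HN)
      ∉ ((HNNExtension.of (φ := φiso)).range : Subgroup HN) := by
  intro hmem
  classical
  let w : HNNExtension.NormalWord.ReducedWord M i2.range i1.range :=
    { head := 1
      toList := [(1, αel), (-1, 1)]
      chain := by
        refine List.isChain_cons_cons.2 ⟨?_, List.isChain_singleton _⟩
        intro h
        exact absurd h αel_notin_A }
  have hprod : w.prod φiso = HNNExtension.t * HNNExtension.of αel * HNNExtension.t⁻¹ := by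
    show HNNExtension.of (1 : M) *
      ((([(((1 : ℤˣ), αel)), (((-1 : ℤˣ), (1 : M)))].map
        (fun x => HNNExtension.t ^ (x.1 : ℤ) * HNNExtension.of x.2)).prod) : HN) = _
    simp [mul_assoc]
  have := HNNExtension.ReducedWord.toList_eq_nil_of_mem_of_range φiso w (by rw [hprod]; exact hmem)
  simp [w] at this


noncomputable abbrev ga : G := PresentedGroup.of 0
noncomputable abbrev gb : G := PresentedGroup.of 1
noncomputable abbrev gt' : G := PresentedGroup.of 2

lemma mk_rel1 : gt'⁻¹ * ga * gt' = gb := by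
  have h : ((FreeGroup.of 2)⁻¹ * FreeGroup.of 0 * FreeGroup.of 2 * (FreeGroup.of 1)⁻¹ :
      FreeGroup (Fin 3)) ∈ Subgroup.normalClosure grels :=
    Subgroup.subset_normalClosure (by left; rfl)
  have h1 : (PresentedGroup.mk grels) ((FreeGroup.of 2)⁻¹ * FreeGroup.of 0 * FreeGroup.of 2 *
      (FreeGroup.of 1)⁻¹) = 1 := (QuotientGroup.eq_one_iff _).mpr h
  rw [map_mul, map_mul, map_mul, map_inv, map_inv] at h1
  exact mul_inv_eq_one.mp h1

lemma mk_rel2 : gt'⁻¹ * gb * gt' = ga * gb * ga⁻¹ := by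
  have h : ((FreeGroup.of 2)⁻¹ * FreeGroup.of 1 * FreeGroup.of 2 *
      (FreeGroup.of 0 * FreeGroup.of 1 * (FreeGroup.of 0)⁻¹)⁻¹ :
      FreeGroup (Fin 3)) ∈ Subgroup.normalClosure grels :=
    Subgroup.subset_normalClosure (by right; rfl)
  have h1 : (PresentedGroup.mk grels) ((FreeGroup.of 2)⁻¹ * FreeGroup.of 1 * FreeGroup.of 2 *
      (FreeGroup.of 0 * FreeGroup.of 1 * (FreeGroup.of 0)⁻¹)⁻¹) = 1 :=
    (QuotientGroup.eq_one_iff _).mpr h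
  simp only [map_mul, map_inv] at h1
  exact mul_inv_eq_one.mp h1

lemma witness_notin_L1 : gt' * ga * gt'⁻¹ ∉ Subgroup.closure ({ga, gb} : Set G) := by
  intro h
  have hle : Subgroup.closure ({ga, gb} : Set G) ≤
      Subgroup.comap χ ((HNNExtension.of (φ := φiso)).range) := by
    apply (Subgroup.closure_le _).2
    rintro x (rfl | rfl)
    · refine Subgroup.mem_comap.mpr ?_
      rw [χ_of0]
      exact ⟨αel, rfl⟩
    · refine Subgroup.mem_comap.mpr ?_
      rw [χ_of1]
      exact ⟨βel, rfl⟩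
  have h2 := hle h
  have h3 : χ (gt' * ga * gt'⁻¹) ∈ (HNNExtension.of (φ := φiso)).range := h2
  rw [map_mul, map_mul, map_inv, χ_of0, χ_of2] at h3
  exact witness_not_in_of_range h3

end Stmt13Aux

theorem stmt_13 :
    ∀ L₁ L₂ : Subgroup (PresentedGroup grels),
      L₁ = Subgroup.closure {PresentedGroup.of 0, PresentedGroup.of 1} →
      L₂ = Subgroup.map
        (MulAut.conj (PresentedGroup.of 2 : PresentedGroup grels)).toMonoidHom L₁ →
      L₁ < L₂ ∧
      -- `L₁` is not separable: it is not an intersection of finite-index subgroups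
      L₁ ≠ ⨅ K ∈ {K : Subgroup (PresentedGroup grels) | L₁ ≤ K ∧ K.index ≠ 0}, K := by
  open Stmt13Aux in
  intro L₁ L₂ hL₁ hL₂
  have haL₁ : ga ∈ L₁ := by
    rw [hL₁]; exact Subgroup.subset_closure (by left; rfl)
  have hbL₁ : gb ∈ L₁ := by
    rw [hL₁]; exact Subgroup.subset_closure (by right; rfl)
  have hwit_in_L2 : gt' * ga * gt'⁻¹ ∈ L₂ := by
    rw [hL₂]
    exact Subgroup.mem_map.mpr ⟨ga, haL₁, by simp [MulAut.conj_apply]⟩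
  have hwit_notin_L1 : gt' * ga * gt'⁻¹ ∉ L₁ := by
    rw [hL₁]; exact witness_notin_L1
  have hle : L₁ ≤ L₂ := by
    rw [hL₁]
    apply (Subgroup.closure_le _).2
    rintro x (rfl | rfl)
    · rw [hL₂]
      refine Subgroup.mem_map.mpr ⟨gb, hbL₁, ?_⟩
      show gt' * gb * gt'⁻¹ = ga
      rw [← mk_rel1]; group
    · rw [hL₂]
      refine Subgroup.mem_map.mpr ⟨ga * gb * ga⁻¹,
        Subgroup.mul_mem _ (Subgroup.mul_mem _ haL₁ hbL₁) (Subgroup.inv_mem _ haL₁), ?_⟩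
      show gt' * (ga * gb * ga⁻¹) * gt'⁻¹ = gb
      rw [← mk_rel2]; group
  constructor
  · refine lt_of_le_of_ne hle fun heq => ?_
    exact hwit_notin_L1 (heq ▸ hwit_in_L2)
  · intro heq
    -- show L₂ is contained in every finite index subgroup K ⊇ L₁
    have hL2le : L₂ ≤ ⨅ K ∈ {K : Subgroup (PresentedGroup grels) | L₁ ≤ K ∧ K.index ≠ 0}, K := by
      refine le_iInf₂ fun K hK => ?_
      obtain ⟨hK1, hK2⟩ := hK
      haveI : K.FiniteIndex := ⟨hK2⟩
      set N := K.normalCore with hN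
      haveI : Finite (PresentedGroup grels ⧸ N) := Subgroup.finite_quotient_of_finiteIndex
      set π := QuotientGroup.mk' N with hπ
      set Hbar := Subgroup.map π L₁ with hHbar
      set c := MulAut.conj (π gt') with hc
      set d := MulAut.conj ((π gt')⁻¹) with hd
      have hgen : Hbar = Subgroup.closure {π ga, π gb} := by
        rw [hHbar, hL₁, MonoidHom.map_closure, Set.image_insert_eq, Set.image_singleton]
      have s1 : Subgroup.map d.toMonoidHom Hbar ≤ Hbar := by
        rw [hgen, MonoidHom.map_closure, Set.image_insert_eq, Set.image_singleton]
        apply (Subgroup.closure_le _).2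
        rintro x (rfl | rfl)
        · have heq1 : d.toMonoidHom (π ga) = π gb := by
            show (π gt')⁻¹ * π ga * ((π gt')⁻¹)⁻¹ = π gb
            rw [inv_inv, ← map_inv, ← map_mul, ← map_mul, mk_rel1]
          rw [heq1]
          exact Subgroup.subset_closure (by right; rfl)
        · have heq2 : d.toMonoidHom (π gb) = (π ga) * (π gb) * (π ga)⁻¹ := by
            show (π gt')⁻¹ * π gb * ((π gt')⁻¹)⁻¹ = _
            rw [inv_inv, ← map_inv, ← map_mul, ← map_mul, mk_rel2]
            simp [map_mul, map_inv]
          rw [heq2]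
          have hga : π ga ∈ Subgroup.closure {π ga, π gb} :=
            Subgroup.subset_closure (by left; rfl)
          have hgb : π gb ∈ Subgroup.closure {π ga, π gb} :=
            Subgroup.subset_closure (by right; rfl)
          exact Subgroup.mul_mem _ (Subgroup.mul_mem _ hga hgb) (Subgroup.inv_mem _ hga)
      have hinj : Function.Injective d.toMonoidHom := d.injective
      have hcard : Nat.card (Subgroup.map d.toMonoidHom Hbar) = Nat.card Hbar :=
        (Nat.card_congr (Subgroup.equivMapOfInjective Hbar _ hinj).toEquiv).symm
      have s3 : Subgroup.map d.toMonoidHom Hbar = Hbar :=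
        Subgroup.eq_of_le_of_card_ge s1 (le_of_eq hcard.symm)
      have cdEq : c.toMonoidHom.comp d.toMonoidHom = MonoidHom.id _ := by
        refine MonoidHom.ext fun q => ?_
        show c (d q) = q
        rw [hc, hd]
        simp only [MulAut.conj_apply]
        group
      have s4 : Subgroup.map c.toMonoidHom Hbar = Hbar := by
        conv_lhs => rw [← s3]
        rw [Subgroup.map_map, cdEq, Subgroup.map_id]
      have s5 : Subgroup.map π L₂ ≤ Subgroup.map π K := by
        rw [hL₂, Subgroup.map_map]
        have hcomm : π.comp (MulAut.conj gt').toMonoidHom = c.toMonoidHom.comp π := by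
          refine MonoidHom.ext fun x => ?_
          show π (MulAut.conj gt' x) = c (π x)
          rw [hc]
          simp only [MulAut.conj_apply, map_mul, map_inv]
        rw [hcomm, ← Subgroup.map_map, ← hHbar, s4, hHbar]
        exact Subgroup.map_mono hK1
      calc L₂ ≤ Subgroup.comap π (Subgroup.map π L₂) := Subgroup.le_comap_map _ _
        _ ≤ Subgroup.comap π (Subgroup.map π K) := Subgroup.comap_mono s5
        _ = K ⊔ N := by rw [Subgroup.comap_map_eq, QuotientGroup.ker_mk']
        _ = K := sup_eq_left.mpr (Subgroup.normalCore_le K)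
    rw [← heq] at hL2le
    exact hwit_notin_L1 (hL2le hwit_in_L2)
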